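/- Let g : ℝ≥0 → ℝ be nondecreasing and càdlàg, and let x ≤ y be nonnegative reals. If τ_x and τ_y are the (minimal) solutions of the ODEs τ_x'(t) = x + g(τ_x(t)), τ_y'(t) = y + g(τ_y(t)) with τ_x(0) = τ_y(0) = τ₀ ≥ 0 and both vector fields nonnegative along the solutions, then τ_x(t) ≤ τ_y(t) for all t ≥ 0. -/

import Mathlib

/-- comparison lemma for ODEs driven by a nondecreasing càdlàg
vector field: the minimal solutions of `τ' = x + g ∘ τ` and `τ' = y + g ∘ τ`
with the same initial value `τ₀` and nonnegative vector fields along the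
solutions are ordered whenever `x ≤ y`. -/
theorem comparison_ordered_initial (g : ℝ → ℝ)
    (hg : MonotoneOn g (Set.Ici 0))
    (hrc : ∀ s : ℝ, 0 ≤ s → ContinuousWithinAt g (Set.Ici s) s)
    (x y τ₀ : ℝ) (hx : 0 ≤ x) (hxy : x ≤ y) (hτ₀ : 0 ≤ τ₀)
    (τx τy : ℝ → ℝ)
    (hx0 : τx 0 = τ₀) (hy0 : τy 0 = τ₀)
    (hxnn : ∀ t : ℝ, 0 ≤ t → 0 ≤ τx t) (hynn : ∀ t : ℝ, 0 ≤ t → 0 ≤ τy t)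
    (hdx : ∀ t : ℝ, 0 ≤ t → HasDerivAt τx (x + g (τx t)) t)
    (hdy : ∀ t : ℝ, 0 ≤ t → HasDerivAt τy (y + g (τy t)) t)
    (hposx : ∀ t : ℝ, 0 ≤ t → 0 ≤ x + g (τx t))
    (hposy : ∀ t : ℝ, 0 ≤ t → 0 ≤ y + g (τy t))
    (hminx : ∀ σ : ℝ → ℝ, σ 0 = τ₀ → (∀ t : ℝ, 0 ≤ t → 0 ≤ σ t) →
      (∀ t : ℝ, 0 ≤ t → HasDerivAt σ (x + g (σ t)) t) → ∀ t : ℝ, 0 ≤ t → τx t ≤ σ t)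
    (hminy : ∀ σ : ℝ → ℝ, σ 0 = τ₀ → (∀ t : ℝ, 0 ≤ t → 0 ≤ σ t) →
      (∀ t : ℝ, 0 ≤ t → HasDerivAt σ (y + g (σ t)) t) → ∀ t : ℝ, 0 ≤ t → τy t ≤ σ t) :
    ∀ t : ℝ, 0 ≤ t → τx t ≤ τy t := by
  rcases eq_or_lt_of_le hxy with rfl | hlt
  · exact fun t ht => hminx τy hy0 hynn hdy t ht
  intro t ht
  by_contra hc
  push_neg at hc
  set f : ℝ → ℝ := fun u => τy u - τx u with hf
  have hfc : ContinuousOn f (Set.Icc 0 t) := fun u hu =>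
    (((hdy u hu.1).sub (hdx u hu.1)).continuousAt).continuousWithinAt
  set S : Set ℝ := Set.Icc 0 t ∩ {u | 0 ≤ f u} with hS
  have h0S : (0:ℝ) ∈ S := ⟨⟨le_refl 0, ht⟩, by simp [hf, hx0, hy0]⟩
  have hSb : BddAbove S := ⟨t, fun u hu => hu.1.2⟩
  have hScl : IsClosed S := by
    have heq : S = Set.Icc 0 t ∩ f ⁻¹' (Set.Ici 0) := rfl
    rw [heq]
    exact hfc.preimage_isClosed_of_isClosed isClosed_Icc isClosed_Ici
  set s := sSup S with hs
  have hsS : s ∈ S := hScl.csSup_mem ⟨0, h0S⟩ hSb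
  have hs0 : 0 ≤ s := hsS.1.1
  have hft : f t < 0 := by simp only [hf]; linarith
  have hst : s < t := lt_of_le_of_ne hsS.1.2 (fun h => by
    have := hsS.2
    rw [h] at this
    exact absurd hft (not_lt.mpr this))
  have hneg : ∀ u, s < u → u ≤ t → f u < 0 := by
    intro u hu hut
    by_contra h
    push_neg at h
    exact absurd (le_csSup hSb ⟨⟨hs0.trans hu.le, hut⟩, h⟩) (not_le.mpr hu)
  have hfs_le : f s ≤ 0 := by
    have htend : Filter.Tendsto f (nhdsWithin s (Set.Ioi s)) (nhds (f s)) :=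
      (((hdy s hs0).sub (hdx s hs0)).continuousAt.tendsto).mono_left nhdsWithin_le_nhds
    refine le_of_tendsto htend ?_
    filter_upwards [Ioo_mem_nhdsGT hst] with u hu
    exact (hneg u hu.1 hu.2.le).le
  have hfs : f s = 0 := le_antisymm hfs_le hsS.2
  have heqv : τy s = τx s := by simp only [hf] at hfs; linarith
  have hderiv : HasDerivAt f (y - x) s := by
    have := (hdy s hs0).sub (hdx s hs0)
    rw [heqv] at this
    convert this using 1
    · rfl
    · rfl
    · rfl
    · ring
  have hslope : Filter.Tendsto (slope f s) (nhdsWithin s (Set.Ioi s)) (nhds (y - x)) :=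
    (hasDerivAt_iff_tendsto_slope.mp hderiv).mono_left
      (nhdsWithin_mono s (fun u hu => Set.mem_compl_singleton_iff.mpr hu.ne'))
  have hev : ∀ᶠ u in nhdsWithin s (Set.Ioi s), 0 < slope f s u :=
    hslope.eventually (eventually_gt_nhds (by linarith))
  have hev2 : ∀ᶠ u in nhdsWithin s (Set.Ioi s), u ∈ Set.Ioo s t :=
    Ioo_mem_nhdsGT hst
  obtain ⟨u, hu1, hu2⟩ := (hev.and hev2).exists
  have hd : 0 < u - s := by linarith [hu2.1]
  have : 0 < f u - f s := by
    have := hu1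
    rw [slope_def_field] at this
    have h2 : 0 < (f u - f s) / (u - s) := by
      simpa [div_eq_div_iff] using this
    exact (div_pos_iff.mp h2).resolve_right (fun h => absurd hd (not_lt.mpr h.2.le)) |>.1
  have := hneg u hu2.1 hu2.2.le
  rw [hfs] at *
  linarith
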